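/- Let (R,m) be a Noetherian local ring with residue field κ = R/m, and let M be a nonzero R-module of finite length, both regarded as objects of the derived category D(R) concentrated in degree 0. Then for every real number t, the infimum over all towers over κ reaching M with shifts n_1, …, n_k of the quantity Σ_{i=1}^{k} e^{n_i · t} is equal to length_R(M); moreover this infimum is attained by a tower with all shifts equal to 0. -/

import Mathlib

open CategoryTheory Limits Pretriangulated IsLocalRing

open Order

section ProdBound

variable {β γ : Type*} [Preorder β] [Preorder γ]

lemma ltSeries_prod_length_le (p : LTSeries (β × γ)) :
    (p.length : ℕ∞) ≤ Order.height p.last.1 + Order.height p.last.2 := by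
  suffices H : ∀ (m : ℕ) (p : LTSeries (β × γ)), p.length = m →
      (p.length : ℕ∞) ≤ Order.height p.last.1 + Order.height p.last.2 from H p.length p rfl
  intro m
  induction m with
  | zero => intro p hn; simp [hn]
  | succ m ih =>
    intro p hn
    have h0 : p.length ≠ 0 := by omega
    have hlt : p.eraseLast.last < p.last := p.eraseLast_last_rel_last h0
    have hlen : p.eraseLast.length = m := by
      simp [RelSeries.eraseLast_length, hn]
    have H := ih p.eraseLast hlen
    rw [hlen] at H
    rcases eq_or_ne (Order.height p.last.1) ⊤ with h1 | h1
    · simp [h1]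
    rcases eq_or_ne (Order.height p.last.2) ⊤ with h2 | h2
    · simp [h2]
    have hle1 : Order.height p.eraseLast.last.1 ≤ Order.height p.last.1 :=
      Order.height_mono hlt.le.1
    have hle2 : Order.height p.eraseLast.last.2 ≤ Order.height p.last.2 :=
      Order.height_mono hlt.le.2
    have key : Order.height p.eraseLast.last.1 + Order.height p.eraseLast.last.2 + 1 ≤
        Order.height p.last.1 + Order.height p.last.2 := by
      rcases Prod.lt_iff.mp hlt with ⟨hl, hr⟩ | ⟨hl, hr⟩
      · have : Order.height p.eraseLast.last.1 < Order.height p.last.1 :=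
          Order.height_strictMono hl (lt_of_le_of_lt hle1 (lt_top_iff_ne_top.mpr h1))
        have h1' : Order.height p.eraseLast.last.1 + 1 ≤ Order.height p.last.1 :=
          Order.add_one_le_of_lt this
        calc Order.height p.eraseLast.last.1 + Order.height p.eraseLast.last.2 + 1
            = (Order.height p.eraseLast.last.1 + 1) + Order.height p.eraseLast.last.2 := by ring
          _ ≤ Order.height p.last.1 + Order.height p.last.2 := add_le_add h1' (Order.height_mono hr)
      · have : Order.height p.eraseLast.last.2 < Order.height p.last.2 :=
          Order.height_strictMono hr (lt_of_le_of_lt hle2 (lt_top_iff_ne_top.mpr h2))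
        have h2' : Order.height p.eraseLast.last.2 + 1 ≤ Order.height p.last.2 :=
          Order.add_one_le_of_lt this
        calc Order.height p.eraseLast.last.1 + Order.height p.eraseLast.last.2 + 1
            = Order.height p.eraseLast.last.1 + (Order.height p.eraseLast.last.2 + 1) := by ring
          _ ≤ Order.height p.last.1 + Order.height p.last.2 :=
            add_le_add (Order.height_mono hl) h2'
    rw [hn]
    calc ((m + 1 : ℕ) : ℕ∞) = (m : ℕ∞) + 1 := by push_cast; ring
      _ ≤ Order.height p.eraseLast.last.1 + Order.height p.eraseLast.last.2 + 1 :=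
          by exact add_le_add_left H 1
      _ ≤ _ := key

lemma krullDim_le_of_strictMono_prod {α : Type*} [Preorder α] (f : α → β × γ)
    (hf : StrictMono f) : Order.krullDim α ≤ Order.krullDim β + Order.krullDim γ := by
  rw [Order.krullDim]
  apply iSup_le
  intro p
  have h := ltSeries_prod_length_le (p.map f hf)
  have h1 : ((Order.height (p.map f hf).last.1 : ℕ∞) : WithBot ℕ∞) ≤ Order.krullDim β :=
    Order.height_le_krullDim _
  have h2 : ((Order.height (p.map f hf).last.2 : ℕ∞) : WithBot ℕ∞) ≤ Order.krullDim γ :=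
    Order.height_le_krullDim _
  calc ((p.length : ℕ∞) : WithBot ℕ∞) = (((p.map f hf).length : ℕ∞) : WithBot ℕ∞) := rfl
    _ ≤ ((Order.height (p.map f hf).last.1 + Order.height (p.map f hf).last.2 : ℕ∞) :
        WithBot ℕ∞) := by exact_mod_cast h
    _ = ((Order.height (p.map f hf).last.1 : ℕ∞) : WithBot ℕ∞) +
        ((Order.height (p.map f hf).last.2 : ℕ∞) : WithBot ℕ∞) := by push_cast; rfl
    _ ≤ _ := add_le_add h1 h2

end ProdBound


/-- The length of a module, defined as the Krull dimension of its lattice of submodules. -/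
noncomputable def moduleLength (R M : Type*) [Ring R] [AddCommGroup M] [Module R M] : ℕ∞ :=
  WithBot.unbotD 0 (Order.krullDim (Submodule R M))

section Length

variable {R : Type*} [Ring R]

lemma krullDim_eq_moduleLength (M : Type*) [AddCommGroup M] [Module R M] :
    Order.krullDim (Submodule R M) = (moduleLength R M : WithBot ℕ∞) := by
  have h0 : (0 : WithBot ℕ∞) ≤ Order.krullDim (Submodule R M) :=
    Order.krullDim_nonneg
  cases h : Order.krullDim (Submodule R M) with
  | bot => rw [h] at h0; simp at h0
  | coe d => simp [moduleLength, h]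

lemma moduleLength_le_iff {M : Type*} [AddCommGroup M] [Module R M] {c : ℕ∞} :
    moduleLength R M ≤ c ↔ Order.krullDim (Submodule R M) ≤ (c : WithBot ℕ∞) := by
  rw [krullDim_eq_moduleLength, WithBot.coe_le_coe]

lemma moduleLength_le_of_injective {M N : Type*} [AddCommGroup M] [Module R M]
    [AddCommGroup N] [Module R N] (f : M →ₗ[R] N) (hf : Function.Injective f) :
    moduleLength R M ≤ moduleLength R N := by
  rw [moduleLength_le_iff, ← krullDim_eq_moduleLength]
  have hmono : Monotone (Submodule.map f) := fun _ _ h => Submodule.map_mono h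
  exact Order.krullDim_le_of_strictMono (Submodule.map f)
    (hmono.strictMono_of_injective (Submodule.map_injective_of_injective hf))

lemma moduleLength_le_of_surjective {M N : Type*} [AddCommGroup M] [Module R M]
    [AddCommGroup N] [Module R N] (f : M →ₗ[R] N) (hf : Function.Surjective f) :
    moduleLength R N ≤ moduleLength R M := by
  rw [moduleLength_le_iff, ← krullDim_eq_moduleLength]
  have hmono : Monotone (Submodule.comap f) := fun _ _ h => Submodule.comap_mono h
  exact Order.krullDim_le_of_strictMono (Submodule.comap f)
    (hmono.strictMono_of_injective (Submodule.comap_injective_of_surjective hf))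

lemma moduleLength_eq_of_equiv {M N : Type*} [AddCommGroup M] [Module R M]
    [AddCommGroup N] [Module R N] (e : M ≃ₗ[R] N) :
    moduleLength R M = moduleLength R N :=
  le_antisymm (moduleLength_le_of_injective e.toLinearMap e.injective)
    (moduleLength_le_of_injective e.symm.toLinearMap e.symm.injective)

lemma submodule_subsingleton {M : Type*} [AddCommGroup M] [Module R M] [Subsingleton M] :
    Subsingleton (Submodule R M) := by
  constructor
  intro a b
  ext x
  simp [Subsingleton.elim x (0 : M)]

lemma moduleLength_eq_zero (M : Type*) [AddCommGroup M] [Module R M] [Subsingleton M] :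
    moduleLength R M = 0 := by
  have : Subsingleton (Submodule R M) := submodule_subsingleton
  have h := Order.krullDim_nonpos_of_subsingleton (α := Submodule R M)
  have h2 := Order.krullDim_nonneg (α := Submodule R M)
  have : Order.krullDim (Submodule R M) = 0 := le_antisymm h h2
  rw [krullDim_eq_moduleLength] at this
  exact_mod_cast this

lemma moduleLength_simple (M : Type*) [AddCommGroup M] [Module R M] [IsSimpleModule R M] :
    moduleLength R M = 1 := by
  have hb : (⊥ : Submodule R M) < ⊤ := bot_lt_top
  apply le_antisymm
  · rw [moduleLength_le_iff, Order.krullDim]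
    apply iSup_le
    intro p
    rcases Nat.lt_or_ge p.length 2 with h | h
    · exact_mod_cast Nat.cast_le.mpr (Nat.lt_succ_iff.mp h)
    · exfalso
      have h0 : (0 : ℕ) < p.length := by omega
      have h1 : (1 : ℕ) < p.length := by omega
      have l01 : p ⟨0, by omega⟩ < p ⟨1, by omega⟩ := p.strictMono (by simp [Fin.lt_def])
      have l12 : p ⟨1, by omega⟩ < p ⟨2, by omega⟩ := p.strictMono (by simp [Fin.lt_def])
      rcases eq_bot_or_eq_top (p ⟨1, by omega⟩) with h' | h'
      · rw [h'] at l01; exact (not_lt_bot l01)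
      · rw [h'] at l12; exact (not_top_lt l12)
  · have : ((1 : ℕ) : WithBot ℕ∞) ≤ Order.krullDim (Submodule R M) := by
      have := LTSeries.length_le_krullDim
        (((RelSeries.singleton _ (⊥ : Submodule R M)).snoc ⊤ hb : LTSeries (Submodule R M)))
      simpa using this
    rw [krullDim_eq_moduleLength] at this
    exact_mod_cast this

lemma moduleLength_le_add (M : Type*) [AddCommGroup M] [Module R M] (N : Submodule R M) :
    moduleLength R M ≤ moduleLength R N + moduleLength R (M ⧸ N) := by
  rw [moduleLength_le_iff]
  have := krullDim_le_of_strictMono_prod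
    (f := fun x : Submodule R M => (x.comap N.subtype, x.map N.mkQ)) ?_
  · refine this.trans ?_
    rw [krullDim_eq_moduleLength, krullDim_eq_moduleLength]
    push_cast
    rfl
  · intro x y hxy
    refine lt_of_le_of_ne ⟨Submodule.comap_mono hxy.le, Submodule.map_mono hxy.le⟩ ?_
    intro he
    have h1 : x.comap N.subtype = y.comap N.subtype := congrArg Prod.fst he
    have h2 : x.map N.mkQ = y.map N.mkQ := congrArg Prod.snd he
    have hinf : N ⊓ x = N ⊓ y := by
      rw [← Submodule.map_comap_subtype N x, ← Submodule.map_comap_subtype N y, h1]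
    have hsup : x ⊔ N = y ⊔ N := by
      have hx := Submodule.comap_map_mkQ N x
      have hy := Submodule.comap_map_mkQ N y
      rw [h2, hy] at hx
      rw [sup_comm x N, sup_comm y N, hx]
    have := sup_lt_sup_of_lt_of_inf_le_inf hxy
      (le_of_eq (by rw [inf_comm y N, inf_comm x N, hinf]))
    rw [hsup] at this
    exact lt_irrefl _ this

end Length

section Exact

variable {R : Type*} [Ring R]

lemma moduleLength_submodule_le {M : Type*} [AddCommGroup M] [Module R M]
    (N : Submodule R M) : moduleLength R N ≤ moduleLength R M :=
  moduleLength_le_of_injective N.subtype N.injective_subtype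

lemma moduleLength_le_of_exact {A B C' : Type*} [AddCommGroup A] [Module R A]
    [AddCommGroup B] [Module R B] [AddCommGroup C'] [Module R C']
    (f : A →ₗ[R] B) (g : B →ₗ[R] C') (h : LinearMap.ker g ≤ LinearMap.range f) :
    moduleLength R B ≤ moduleLength R A + moduleLength R C' := by
  refine (moduleLength_le_add B (LinearMap.ker g)).trans (add_le_add ?_ ?_)
  · set p : Submodule R A := Submodule.comap f (LinearMap.ker g) with hp
    have hmaps : ∀ x ∈ p, f x ∈ LinearMap.ker g := fun x hx => hx
    have hsurj : Function.Surjective (f.restrict hmaps) := by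
      rintro ⟨b, hb⟩
      obtain ⟨a, ha⟩ := h hb
      have hap : a ∈ p := by simp [hp, Submodule.mem_comap, ha, hb]
      exact ⟨⟨a, hap⟩, Subtype.ext (by simpa [LinearMap.restrict_apply] using ha)⟩
    exact (moduleLength_le_of_surjective (f.restrict hmaps) hsurj).trans
      (moduleLength_submodule_le p)
  · have hinj : Function.Injective ((LinearMap.ker g).liftQ g le_rfl) := by
      rw [← LinearMap.ker_eq_bot]
      exact Submodule.ker_liftQ_eq_bot _ _ _ le_rfl
    exact moduleLength_le_of_injective _ hinj

end Exact

universe w u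

variable {R : Type u} [CommRing R] [HasDerivedCategory.{w} (ModuleCat.{u} R)]

/-- A tower of distinguished triangles over `G` reaching `Y` with shifts `n 0, …, n (k-1)`:
objects `0 ≅ E 0, E 1, …, E k ≅ Y` of the derived category together with distinguished
triangles `E i ⟶ E (i+1) ⟶ G⟦n i⟧ ⟶ (E i)⟦1⟧`. -/
def IsTower (G Y : DerivedCategory (ModuleCat.{u} R)) {k : ℕ} (n : Fin k → ℤ)
    (E : Fin (k + 1) → DerivedCategory (ModuleCat.{u} R)) : Prop :=
  IsZero (E 0) ∧ Nonempty (E (Fin.last k) ≅ Y) ∧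
    ∀ i : Fin k, ∃ (f : E i.castSucc ⟶ E i.succ) (g : E i.succ ⟶ G⟦n i⟧)
      (h : G⟦n i⟧ ⟶ (E i.castSucc)⟦(1 : ℤ)⟧),
      Triangle.mk f g h ∈ distTriang (DerivedCategory (ModuleCat.{u} R))


section DerivedAux

set_option linter.unusedSectionVars false

namespace ComplexityAux

noncomputable def singleQIso (n : ℤ) :
    DerivedCategory.singleFunctor (ModuleCat.{u} R) n ≅
      HomologicalComplex.single (ModuleCat.{u} R) (ComplexShape.up ℤ) n ⋙
        DerivedCategory.Q :=
  (SingleFunctors.evaluation _ _ n).mapIso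
    (DerivedCategory.singleFunctorsPostcompQIso (ModuleCat.{u} R))

noncomputable def homologySingleIso (X : ModuleCat.{u} R) :
    (DerivedCategory.homologyFunctor (ModuleCat.{u} R) 0).obj
      ((DerivedCategory.singleFunctor (ModuleCat.{u} R) 0).obj X) ≅ X :=
  (DerivedCategory.homologyFunctor (ModuleCat.{u} R) 0).mapIso ((singleQIso 0).app X) ≪≫
    (DerivedCategory.homologyFunctorFactors (ModuleCat.{u} R) 0).app _ ≪≫
    HomologicalComplex.singleObjHomologySelfIso _ _ X

lemma isZero_homology_single (m : ℤ) (hm : m ≠ 0) (X : ModuleCat.{u} R) :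
    IsZero ((DerivedCategory.homologyFunctor (ModuleCat.{u} R) m).obj
      ((DerivedCategory.singleFunctor (ModuleCat.{u} R) 0).obj X)) := by
  have e := (DerivedCategory.homologyFunctor (ModuleCat.{u} R) m).mapIso
      ((singleQIso 0).app X) ≪≫
    (DerivedCategory.homologyFunctorFactors (ModuleCat.{u} R) m).app _
  exact (HomologicalComplex.isZero_single_obj_homology _ 0 X m hm).of_iso e

noncomputable def homologyShiftIso (n : ℤ) (Y : DerivedCategory (ModuleCat.{u} R)) :
    (DerivedCategory.homologyFunctor (ModuleCat.{u} R) 0).obj (Y⟦n⟧) ≅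
      (DerivedCategory.homologyFunctor (ModuleCat.{u} R) n).obj Y :=
  ((DerivedCategory.homologyFunctor (ModuleCat.{u} R) 0).shiftIso n 0 n (add_zero n)).app Y

noncomputable abbrev H0 := DerivedCategory.homologyFunctor (ModuleCat.{u} R) 0

lemma subsingleton_of_isZero {X : ModuleCat.{u} R} (h : IsZero X) : Subsingleton X := by
  have e : X ≅ ModuleCat.of R PUnit :=
    h.iso (ModuleCat.isZero_of_subsingleton (ModuleCat.of R PUnit))
  exact Equiv.subsingleton (e.toLinearEquiv.toEquiv)

lemma length_le_of_dist (T : Triangle (DerivedCategory (ModuleCat.{u} R)))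
    (hT : T ∈ distTriang (DerivedCategory (ModuleCat.{u} R))) :
    moduleLength R ((H0 (R := R)).obj T.obj₂) ≤
      moduleLength R ((H0 (R := R)).obj T.obj₁) +
      moduleLength R ((H0 (R := R)).obj T.obj₃) := by
  have h := DerivedCategory.HomologySequence.exact₂ T hT 0
  rw [ShortComplex.moduleCat_exact_iff_ker_sub_range] at h
  exact moduleLength_le_of_exact _ _ h

lemma length_H0_single_shift (X : ModuleCat.{u} R) (n : ℤ) :
    moduleLength R ((H0 (R := R)).obj
        (((DerivedCategory.singleFunctor (ModuleCat.{u} R) 0).obj X)⟦n⟧)) =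
      if n = 0 then moduleLength R X else 0 := by
  have e1 := homologyShiftIso (R := R) n
    ((DerivedCategory.singleFunctor (ModuleCat.{u} R) 0).obj X)
  by_cases hn : n = 0
  · subst hn
    have e2 := homologySingleIso (R := R) X
    rw [if_pos rfl]
    exact moduleLength_eq_of_equiv (e1 ≪≫ e2).toLinearEquiv
  · rw [if_neg hn]
    have hz := isZero_homology_single (R := R) n hn X
    have : Subsingleton ((H0 (R := R)).obj
        (((DerivedCategory.singleFunctor (ModuleCat.{u} R) 0).obj X)⟦n⟧)) :=
      subsingleton_of_isZero (hz.of_iso e1)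
    exact moduleLength_eq_zero _

noncomputable abbrev sing (X : ModuleCat.{u} R) : DerivedCategory (ModuleCat.{u} R) :=
  (DerivedCategory.singleFunctor (ModuleCat.{u} R) 0).obj X

noncomputable abbrev Gκ [IsLocalRing R] : DerivedCategory (ModuleCat.{u} R) :=
  sing (ModuleCat.of R (R ⧸ maximalIdeal R))

lemma triangle_of_submodule (M : Type u) [AddCommGroup M] [Module R M] (N : Submodule R M) :
    ∃ (f : sing (ModuleCat.of R N) ⟶ sing (ModuleCat.of R M))
      (g : sing (ModuleCat.of R M) ⟶ sing (ModuleCat.of R (M ⧸ N)))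
      (h : sing (ModuleCat.of R (M ⧸ N)) ⟶ (sing (ModuleCat.of R N))⟦(1 : ℤ)⟧),
      Triangle.mk f g h ∈ distTriang (DerivedCategory (ModuleCat.{u} R)) := by
  have hcomp : (N.mkQ).comp N.subtype = 0 := by ext x; simp
  let S : ShortComplex (ModuleCat.{u} R) := ShortComplex.moduleCatMk N.subtype N.mkQ hcomp
  have hS : S.ShortExact := by
    refine ShortComplex.ShortExact.mk' ?_ ?_ ?_
    · rw [ShortComplex.moduleCat_exact_iff_ker_sub_range]
      intro x hx
      exact ⟨⟨x, by simpa using (Submodule.Quotient.mk_eq_zero N).mp hx⟩, rfl⟩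
    · rw [ModuleCat.mono_iff_injective]; exact N.injective_subtype
    · rw [ModuleCat.epi_iff_surjective]; exact Submodule.mkQ_surjective N
  exact ⟨_, _, _, hS.singleTriangle_distinguished⟩

lemma triangle_conj {X X' Z Z' Y : DerivedCategory (ModuleCat.{u} R)}
    (eX : X' ≅ X) (eZ : Z ≅ Z')
    (f : X ⟶ Y) (g : Y ⟶ Z) (h : Z ⟶ X⟦(1:ℤ)⟧)
    (hT : Triangle.mk f g h ∈ distTriang (DerivedCategory (ModuleCat.{u} R))) :
    ∃ (f' : X' ⟶ Y) (g' : Y ⟶ Z') (h' : Z' ⟶ X'⟦(1:ℤ)⟧),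
      Triangle.mk f' g' h' ∈ distTriang (DerivedCategory (ModuleCat.{u} R)) := by
  refine ⟨eX.hom ≫ f, g ≫ eZ.hom,
    eZ.inv ≫ h ≫ (shiftFunctor (DerivedCategory (ModuleCat.{u} R)) (1:ℤ)).map eX.inv, ?_⟩
  refine isomorphic_distinguished _ hT _ ?_
  refine Triangle.isoMk _ _ eX (Iso.refl _) eZ.symm ?_ ?_ ?_
  · exact Category.comp_id _
  · show (g ≫ eZ.hom) ≫ eZ.inv = 𝟙 Y ≫ g
    simp
  · show (eZ.inv ≫ h ≫ (shiftFunctor (DerivedCategory (ModuleCat.{u} R)) (1:ℤ)).map eX.inv) ≫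
      (shiftFunctor (DerivedCategory (ModuleCat.{u} R)) (1:ℤ)).map eX.hom = eZ.inv ≫ h
    simp [← Functor.map_comp]

noncomputable def quotIsoKappa [IsLocalRing R] (M : Type u) [AddCommGroup M] [Module R M]
    (N : Submodule R M) [IsSimpleModule R (M ⧸ N)] :
    ModuleCat.of R (M ⧸ N) ≅ ModuleCat.of R (R ⧸ maximalIdeal R) := by
  have h := isSimpleModule_iff_quot_maximal.mp (inferInstance : IsSimpleModule R (M ⧸ N))
  have hIm : h.choose = maximalIdeal R := IsLocalRing.eq_maximalIdeal h.choose_spec.1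
  exact (h.choose_spec.2.some.trans (Submodule.quotEquivOfEq _ _ hIm)).toModuleIso

lemma exists_tower [IsLocalRing R] (M : Type u) [AddCommGroup M] [Module R M]
    (hM : IsFiniteLength R M) :
    ∃ (c : ℕ) (p : LTSeries (Submodule R M)), p.head = ⊥ ∧ p.last = ⊤ ∧ p.length = c ∧
      moduleLength R M = (c : ℕ∞) ∧
      ∃ E : Fin (c+1) → DerivedCategory (ModuleCat.{u} R),
        IsTower (Gκ (R := R)) (sing (ModuleCat.of R M)) (fun _ : Fin c => (0:ℤ)) E := by
  induction hM with
  | @of_subsingleton M' _ _ _ =>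
    have hsub : Subsingleton (Submodule R M') := submodule_subsingleton
    refine ⟨0, RelSeries.singleton _ ⊥, rfl, Subsingleton.elim _ _, rfl, ?_, ?_⟩
    · simpa using moduleLength_eq_zero (R := R) M'
    · refine ⟨fun _ => sing (ModuleCat.of R M'), ?_, ⟨Iso.refl _⟩, fun i => i.elim0⟩
      haveI : Subsingleton (ModuleCat.of R M') := ‹Subsingleton M'›
      exact Functor.map_isZero _ (ModuleCat.isZero_of_subsingleton (ModuleCat.of R M'))
  | @of_simple_quotient M' _ _ N _ hN ih =>
    obtain ⟨c, p, hh, hl, hlen, hlenN, E, hz, ⟨eN⟩, htri⟩ := ih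
    have hmono : Monotone (Submodule.map N.subtype) := fun _ _ h => Submodule.map_mono h
    have hsm : StrictMono (Submodule.map N.subtype) :=
      hmono.strictMono_of_injective (Submodule.map_injective_of_injective N.injective_subtype)
    have hNtop : N ≠ ⊤ := by
      intro h
      have h2 : Subsingleton (M' ⧸ N) := Submodule.Quotient.subsingleton_iff.mpr h
      have h3 : Nontrivial (M' ⧸ N) := IsSimpleModule.nontrivial R (M' ⧸ N)
      exact not_subsingleton _ h2
    have hlt : (p.map _ hsm).last < ⊤ := by
      rw [LTSeries.last_map, hl, Submodule.map_subtype_top]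
      exact lt_top_iff_ne_top.mpr hNtop
    refine ⟨c + 1, (p.map _ hsm).snoc ⊤ hlt, ?_, ?_, ?_, ?_, ?_⟩
    · rw [RelSeries.head_snoc, LTSeries.head_map, hh, Submodule.map_bot]
    · exact RelSeries.last_snoc _ _ _
    · simp [hlen]
    · -- moduleLength M' = c + 1
      apply le_antisymm
      · refine (moduleLength_le_add M' N).trans ?_
        rw [hlenN, moduleLength_simple (M' ⧸ N)]
        push_cast
        rfl
      · have hq := LTSeries.length_le_krullDim ((p.map _ hsm).snoc ⊤ hlt)
        rw [krullDim_eq_moduleLength] at hq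
        have hqlen : ((p.map _ hsm).snoc ⊤ hlt).length = c + 1 := by
          simp [hlen]
        rw [hqlen] at hq
        exact_mod_cast hq
    · -- the tower
      obtain ⟨f, g, h, hT⟩ := triangle_of_submodule M' N
      have eQ : sing (ModuleCat.of R (M' ⧸ N)) ≅ (Gκ (R := R))⟦(0:ℤ)⟧ :=
        (DerivedCategory.singleFunctor (ModuleCat.{u} R) 0).mapIso (quotIsoKappa M' N) ≪≫
          ((shiftFunctorZero (DerivedCategory (ModuleCat.{u} R)) ℤ).app (Gκ (R := R))).symm
      obtain ⟨f', g', h', hT'⟩ := triangle_conj eN eQ f g h hT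
      refine ⟨Fin.snoc E (sing (ModuleCat.of R M')), ?_, ?_, ?_⟩
      · rw [show (0 : Fin (c+1+1)) = Fin.castSucc 0 from rfl, Fin.snoc_castSucc]
        exact hz
      · rw [Fin.snoc_last]
        exact ⟨Iso.refl _⟩
      · intro i
        refine Fin.lastCases ?_ ?_ i
        · rw [Fin.succ_last, Fin.snoc_last,
            show (Fin.last c).castSucc = Fin.castSucc (Fin.last c) from rfl, Fin.snoc_castSucc]
          exact ⟨f', g', h', hT'⟩
        · intro j
          rw [Fin.succ_castSucc, Fin.snoc_castSucc, Fin.snoc_castSucc]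
          exact htri j

end ComplexityAux

end DerivedAux


/-- Let `(R,m)` be a Noetherian local ring with residue field
`κ = R ⧸ m` and `M` a nonzero `R`-module of finite length, regarded as objects of `D(R)`
concentrated in degree `0`. For every real `t`, the set of values `∑ i, e^{n i · t}` over
all towers over `κ` reaching `M` has greatest lower bound `length_R M`; moreover this
infimum is attained by a tower all of whose shifts are `0`. -/
theorem complexity_eq_length [IsNoetherianRing R] [IsLocalRing R]
    (M : Type u) [AddCommGroup M] [Module R M] [Nontrivial M]
    (hM : IsFiniteLength R M) (t : ℝ) :
    IsGLB {x : ℝ | ∃ (k : ℕ) (n : Fin k → ℤ)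
        (E : Fin (k + 1) → DerivedCategory (ModuleCat.{u} R)),
        IsTower ((DerivedCategory.singleFunctor (ModuleCat.{u} R) 0).obj
            (ModuleCat.of R (R ⧸ maximalIdeal R)))
          ((DerivedCategory.singleFunctor (ModuleCat.{u} R) 0).obj (ModuleCat.of R M)) n E ∧
        x = ∑ i : Fin k, Real.exp (n i * t)}
      ((moduleLength R M).toNat : ℝ) ∧
    ∃ (k : ℕ) (E : Fin (k + 1) → DerivedCategory (ModuleCat.{u} R)),
      IsTower ((DerivedCategory.singleFunctor (ModuleCat.{u} R) 0).obj
          (ModuleCat.of R (R ⧸ maximalIdeal R)))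
        ((DerivedCategory.singleFunctor (ModuleCat.{u} R) 0).obj (ModuleCat.of R M))
        (fun _ : Fin k => (0 : ℤ)) E ∧
      (∑ _i : Fin k, Real.exp ((0 : ℤ) * t)) = ((moduleLength R M).toNat : ℝ) := by
  classical
  obtain ⟨c, p, hh, hl, hlen, hlength, E, hE⟩ := ComplexityAux.exists_tower (R := R) M hM
  have htoNat : ((moduleLength R M).toNat : ℝ) = (c : ℝ) := by rw [hlength]; simp
  have hsum : (∑ _i : Fin c, Real.exp (((0 : ℤ) : ℝ) * t)) = (c : ℝ) := by
    simp [Real.exp_zero]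
  haveI hsimpleκ : IsSimpleModule R (R ⧸ maximalIdeal R) :=
    isSimpleModule_iff_isCoatom.mpr (IsLocalRing.maximalIdeal.isMaximal R).out
  have hκ : moduleLength R (R ⧸ maximalIdeal R) = 1 := moduleLength_simple _
  have hmem : (c : ℝ) ∈ {x : ℝ | ∃ (k : ℕ) (n : Fin k → ℤ)
      (E : Fin (k + 1) → DerivedCategory (ModuleCat.{u} R)),
      IsTower ((DerivedCategory.singleFunctor (ModuleCat.{u} R) 0).obj
          (ModuleCat.of R (R ⧸ maximalIdeal R)))
        ((DerivedCategory.singleFunctor (ModuleCat.{u} R) 0).obj (ModuleCat.of R M)) n E ∧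
      x = ∑ i : Fin k, Real.exp (n i * t)} := ⟨c, fun _ => (0 : ℤ), E, hE, hsum.symm⟩
  have hlb : ∀ x ∈ {x : ℝ | ∃ (k : ℕ) (n : Fin k → ℤ)
      (E : Fin (k + 1) → DerivedCategory (ModuleCat.{u} R)),
      IsTower ((DerivedCategory.singleFunctor (ModuleCat.{u} R) 0).obj
          (ModuleCat.of R (R ⧸ maximalIdeal R)))
        ((DerivedCategory.singleFunctor (ModuleCat.{u} R) 0).obj (ModuleCat.of R M)) n E ∧
      x = ∑ i : Fin k, Real.exp (n i * t)}, (c : ℝ) ≤ x := by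
    rintro x ⟨k, n, E', ⟨hz', ⟨elast⟩, htri'⟩, rfl⟩
    have key : ∀ i : Fin (k+1),
        moduleLength R ((ComplexityAux.H0 (R := R)).obj (E' i)) ≤
          ((∑ j ∈ Finset.univ.filter (fun j : Fin k => (j : ℕ) < (i : ℕ)),
            (if n j = 0 then 1 else 0 : ℕ) : ℕ) : ℕ∞) := by
      intro i
      induction i using Fin.induction with
      | zero =>
        haveI : Subsingleton ((ComplexityAux.H0 (R := R)).obj (E' 0)) :=
          ComplexityAux.subsingleton_of_isZero (Functor.map_isZero _ hz')
        rw [moduleLength_eq_zero]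
        exact zero_le
      | succ i ih =>
        obtain ⟨f, g, h, hT⟩ := htri' i
        have h1 := ComplexityAux.length_le_of_dist _ hT
        have h2 := ComplexityAux.length_H0_single_shift
          (ModuleCat.of R (R ⧸ maximalIdeal R)) (n i)
        have hins : Finset.univ.filter (fun j : Fin k => (j : ℕ) < ((i.succ : Fin (k+1)) : ℕ)) =
            insert i (Finset.univ.filter (fun j : Fin k => (j : ℕ) < ((i.castSucc : Fin (k+1)) : ℕ))) := by
          ext j
          simp only [Finset.mem_filter, Finset.mem_univ, true_and, Finset.mem_insert,
            Fin.val_succ, Fin.coe_castSucc, Nat.lt_succ_iff_lt_or_eq, Fin.ext_iff]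
          tauto
        have h2' : moduleLength R ((ComplexityAux.H0 (R := R)).obj
            ((shiftFunctor (DerivedCategory (ModuleCat.{u} R)) (n i)).obj
              ((DerivedCategory.singleFunctor (ModuleCat.{u} R) 0).obj
                (ModuleCat.of R (R ⧸ maximalIdeal R))))) =
            if n i = 0 then moduleLength R ((ModuleCat.of R (R ⧸ maximalIdeal R)) : Type u)
            else 0 := h2
        change moduleLength R ((ComplexityAux.H0 (R := R)).obj (E' i.succ)) ≤
          moduleLength R ((ComplexityAux.H0 (R := R)).obj (E' i.castSucc)) +
          moduleLength R ((ComplexityAux.H0 (R := R)).obj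
            ((shiftFunctor (DerivedCategory (ModuleCat.{u} R)) (n i)).obj
              ((DerivedCategory.singleFunctor (ModuleCat.{u} R) 0).obj
                (ModuleCat.of R (R ⧸ maximalIdeal R))))) at h1
        refine h1.trans ?_
        rw [h2', hins, Finset.sum_insert (by simp), Nat.cast_add]
        have hκ' : moduleLength R ((ModuleCat.of R (R ⧸ maximalIdeal R)) : Type u) = 1 := hκ
        have hci : (if n i = 0 then
            moduleLength R ((ModuleCat.of R (R ⧸ maximalIdeal R)) : Type u) else 0) ≤
            ((if n i = 0 then 1 else 0 : ℕ) : ℕ∞) := by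
          by_cases hni : n i = 0 <;> simp [hni, hκ']
        exact le_trans (add_le_add ih hci) (le_of_eq (add_comm _ _))
    have hfull := key (Fin.last k)
    have hfil : Finset.univ.filter (fun j : Fin k => (j : ℕ) < ((Fin.last k : Fin (k+1)) : ℕ)) =
        Finset.univ := Finset.filter_true_of_mem (fun j _ => j.isLt)
    rw [hfil] at hfull
    have hlastlen : moduleLength R ((ComplexityAux.H0 (R := R)).obj (E' (Fin.last k))) =
        moduleLength R M := by
      have e := (ComplexityAux.H0 (R := R)).mapIso elast ≪≫
        ComplexityAux.homologySingleIso (ModuleCat.of R M)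
      exact moduleLength_eq_of_equiv e.toLinearEquiv
    rw [hlastlen, hlength] at hfull
    have hc : c ≤ ∑ j : Fin k, (if n j = 0 then 1 else 0 : ℕ) := by exact_mod_cast hfull
    calc (c : ℝ) ≤ ((∑ j : Fin k, (if n j = 0 then 1 else 0 : ℕ) : ℕ) : ℝ) := by
          exact_mod_cast hc
      _ = ∑ j : Fin k, ((if n j = 0 then 1 else 0 : ℕ) : ℝ) := by push_cast; rfl
      _ ≤ ∑ i : Fin k, Real.exp (n i * t) := by
          refine Finset.sum_le_sum fun j _ => ?_
          by_cases hnj : n j = 0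
          · simp [hnj, Real.exp_zero]
          · simp only [hnj, if_false, Nat.cast_zero]
            exact (Real.exp_pos _).le
  constructor
  · constructor
    · intro x hx
      rw [htoNat]
      exact hlb x hx
    · intro y hy
      have := hy hmem
      rw [htoNat]
      exact this
  · exact ⟨c, E, hE, by rw [hsum.trans htoNat.symm]⟩
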